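/- arXiv:1810.04830 — 2 statements merged into one kernel-verified Lean document; each statement's English description precedes it below -/
import Mathlib

section
/- The mean value A(n) = S(n)/2^n of the depth-n row of the Calkin–Wilf tree converges to 3/2 as n → ∞. -/
def cwNode : List Bool → ℚ
  | [] => 1
  | b :: l => let x := cwNode l; if b then x + 1 else x / (x + 1)

noncomputable def S (n : ℕ) : ℚ := ∑ f : Fin n → Bool, cwNode (List.ofFn f)

noncomputable def A (n : ℕ) : ℝ := (S n : ℝ) / 2 ^ n

lemma cw_pos (l : List Bool) : 0 < cwNode l := by
  induction l with
  | nil => norm_num [cwNode]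
  | cons b l ih =>
    cases b <;> simp only [cwNode] <;> positivity

lemma cw_compl (l : List Bool) : cwNode (l.map not) = (cwNode l)⁻¹ := by
  induction l with
  | nil => simp [cwNode]
  | cons b l ih =>
    have hx := cw_pos l
    have hx0 : cwNode l ≠ 0 := ne_of_gt hx
    have hx1 : cwNode l + 1 ≠ 0 := by positivity
    cases b <;> simp only [List.map_cons, Bool.not_false, Bool.not_true, cwNode, ih, Bool.false_eq_true, ↓reduceIte] <;>
      field_simp <;> ring

lemma key (l : List Bool) :
    cwNode (l.map not) / (cwNode (l.map not) + 1) = 1 - cwNode l / (cwNode l + 1) := by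
  have hx := cw_pos l
  have hx0 : cwNode l ≠ 0 := ne_of_gt hx
  have hx1 : cwNode l + 1 ≠ 0 := by positivity
  rw [cw_compl]
  field_simp
  ring

lemma half_sum (n : ℕ) :
    ∑ f : Fin n → Bool, cwNode (List.ofFn f) / (cwNode (List.ofFn f) + 1)
      = 2 ^ n / 2 := by
  set g : (Fin n → Bool) → ℚ := fun f => cwNode (List.ofFn f) / (cwNode (List.ofFn f) + 1)
    with hg
  have e : ∑ f : Fin n → Bool, g f = ∑ f : Fin n → Bool, g (fun i => !(f i)) := by
    exact (Fintype.sum_bijective (fun f : Fin n → Bool => fun i => !(f i))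
      (Function.Involutive.bijective (fun f => by funext i; simp))
      (fun f => g (fun i => !(f i))) g (fun f => rfl)).symm
  have h2 : (2 : ℚ) * ∑ f : Fin n → Bool, g f = 2 ^ n := by
    rw [two_mul]
    nth_rewrite 2 [e]
    rw [← Finset.sum_add_distrib]
    have : ∀ f : Fin n → Bool, g f + g (fun i => !(f i)) = 1 := by
      intro f
      have : List.ofFn (fun i => !(f i)) = (List.ofFn f).map not := by
        rw [List.map_ofFn]; rfl
      simp only [hg, this, key]
      ring
    simp only [this]
    simp [Finset.card_univ]
  linarith [h2]

lemma S_succ (n : ℕ) : S (n + 1) = S n + 3 * 2 ^ n / 2 := by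
  have := Fintype.sum_equiv ((Fin.consEquiv (fun _ => Bool)))
    (fun p : Bool × (Fin n → Bool) => cwNode (p.1 :: List.ofFn p.2))
    (fun f : Fin (n+1) → Bool => cwNode (List.ofFn f)) ?_
  · rw [S, ← this, Fintype.sum_prod_type]
    simp only [Fintype.sum_bool]
    have h1 : ∀ l, cwNode (true :: l) = cwNode l + 1 := fun l => by simp [cwNode]
    have h2 : ∀ l, cwNode (false :: l) = cwNode l / (cwNode l + 1) := fun l => by
      simp [cwNode]
    simp only [h1, h2]
    rw [Finset.sum_add_distrib, half_sum]
    simp [S, Finset.card_univ]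
    ring
  · intro p
    simp [Fin.consEquiv, List.ofFn_succ]

lemma S_closed (n : ℕ) : S n = (3 * 2 ^ n - 1) / 2 := by
  induction n with
  | zero => simp [S, cwNode]; norm_num
  | succ n ih => rw [S_succ, ih]; ring

theorem cw_mean_tendsto : Filter.Tendsto A Filter.atTop (nhds (3 / 2)) := by
  have hA : ∀ n, A n = 3 / 2 - (1 / 2) * (1 / 2 : ℝ) ^ n := by
    intro n
    have h2 : (2 : ℝ) ^ n ≠ 0 := by positivity
    rw [A, S_closed]
    push_cast
    field_simp
    have h3 : (1 / 2 : ℝ) ^ n * 2 ^ n = 1 := by rw [← mul_pow]; norm_num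
    linear_combination h3
  rw [show A = fun n => 3 / 2 - (1 / 2) * (1 / 2 : ℝ) ^ n from funext hA]
  have h : Filter.Tendsto (fun n : ℕ => (1 / 2 : ℝ) ^ n) Filter.atTop (nhds 0) := by
    apply tendsto_pow_atTop_nhds_zero_of_lt_one <;> norm_num
  have h2 : Filter.Tendsto (fun n : ℕ => 3 / 2 - (1 / 2) * (1 / 2 : ℝ) ^ n)
      Filter.atTop (nhds (3 / 2 - (1 / 2) * 0)) :=
    tendsto_const_nhds.sub (h.const_mul _)
  simpa using h2
end

section
/- Let α = [p_0; p_1, …, p_s] and β = [q_0; q_1, …, q_r] be distinct finite continued fractions, and suppose p_i = q_i for all i ≤ k (with k ≤ min(r,s) and s,r > k or the values differ past index k). Then |α − β| ≤ ∏_{j=1}^{k} 1/p_j². -/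
def cf : List ℕ → ℚ
  | [] => 0
  | [q] => q
  | q :: l => q + 1 / cf l

lemma cf_cons_cons (a b : ℕ) (t : List ℕ) : cf (a :: b :: t) = a + 1 / cf (b :: t) := rfl

lemma cf_ge_one : ∀ l : List ℕ, (∀ x ∈ l, 1 ≤ x) → l ≠ [] → 1 ≤ cf l
  | [], _, h => absurd rfl h
  | [a], h, _ => by
      simp only [cf]; exact_mod_cast h a (by simp)
  | a :: b :: t, h, _ => by
      have ht : 1 ≤ cf (b :: t) :=
        cf_ge_one (b :: t) (fun x hx => h x (by simp [hx])) (by simp)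
      have ha : (1:ℚ) ≤ a := by exact_mod_cast h a (by simp)
      rw [cf_cons_cons]
      have : 0 < 1 / cf (b :: t) := by positivity
      linarith

lemma cf_bounds (a : ℕ) (t : List ℕ) (h : ∀ x ∈ t, 1 ≤ x) :
    (a : ℚ) ≤ cf (a :: t) ∧ cf (a :: t) ≤ a + 1 := by
  cases t with
  | nil => simp [cf]
  | cons b t =>
    have ht : 1 ≤ cf (b :: t) := cf_ge_one (b :: t) h (by simp)
    rw [cf_cons_cons]
    have hpos : 0 < 1 / cf (b :: t) := by positivity
    constructor
    · linarith
    · have h1 : 1 / cf (b :: t) ≤ 1 := by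
        rw [div_le_one (by linarith)]; linarith
      linarith

lemma tail_ge (p : List ℕ) (hp : ∀ i, 1 ≤ i → i < p.length → 0 < p.getD i 0) :
    ∀ x ∈ p.tail, 1 ≤ x := by
  cases p with
  | nil => simp
  | cons a t =>
    simp only [List.tail_cons]
    intro x hx
    obtain ⟨i, hi, rfl⟩ := List.mem_iff_getElem.mp hx
    have h := hp (i+1) (by omega) (by simp; omega)
    rw [List.getD_cons_succ, List.getD_eq_getElem _ _ hi] at h
    omega

lemma cf_aux : ∀ (k : ℕ) (p q : List ℕ),
    (∀ x ∈ p.tail, 1 ≤ x) → (∀ x ∈ q.tail, 1 ≤ x) →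
    k < p.length → k < q.length →
    (∀ i, i ≤ k → p.getD i 0 = q.getD i 0) →
    |cf p - cf q| ≤ ∏ j ∈ Finset.Icc 1 k, (1 : ℚ) / (p.getD j 0) ^ 2
  | 0, [], q, _, _, hkp, _, _ => by simp at hkp
  | 0, p, [], _, _, _, hkq, _ => by simp at hkq
  | 0, a :: p', b :: q', hp, hq, _, _, hagree => by
      have hab : a = b := by simpa using hagree 0 le_rfl
      subst hab
      obtain ⟨h1, h2⟩ := cf_bounds a p' hp
      obtain ⟨h3, h4⟩ := cf_bounds a q' hq
      rw [Finset.Icc_eq_empty (by omega), Finset.prod_empty, abs_sub_le_iff]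
      constructor <;> linarith
  | k+1, [], q, _, _, hkp, _, _ => by simp at hkp
  | k+1, p, [], _, _, _, hkq, _ => by simp at hkq
  | k+1, [a], q, _, _, hkp, _, _ => by simp at hkp
  | k+1, p, [b], _, _, _, hkq, _ => by simp at hkq
  | k+1, a :: x :: p', b :: y :: q', hp, hq, hkp, hkq, hagree => by
      have hab : a = b := by simpa using hagree 0 (by omega)
      subst hab
      set P := x :: p'
      set Q := y :: q'
      have hxy : x = y := by simpa [P, Q] using hagree 1 (by omega)
      have hP1 : (1:ℚ) ≤ x := by exact_mod_cast hp x (by simp [P])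
      have hcfP : (x:ℚ) ≤ cf P ∧ cf P ≤ x + 1 :=
        cf_bounds x p' (fun z hz => hp z (by simp [P, hz]))
      have hcfQ : (y:ℚ) ≤ cf Q ∧ cf Q ≤ y + 1 :=
        cf_bounds y q' (fun z hz => hq z (by simp [Q, hz]))
      have hPpos : (0:ℚ) < cf P := by linarith [hcfP.1]
      have hQpos : (0:ℚ) < cf Q := by linarith [hcfQ.1, hxy ▸ hP1]
      have ih := cf_aux k P Q (fun z hz => hp z (by simp [P]; tauto))
        (fun z hz => hq z (by simp [Q]; tauto))
        (by simpa using Nat.lt_of_succ_lt_succ hkp)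
        (by simpa using Nat.lt_of_succ_lt_succ hkq)
        (fun i hi => by simpa using hagree (i+1) (by omega))
      have key : |cf (a :: P) - cf (a :: Q)| = |cf P - cf Q| / (cf P * cf Q) := by
        rw [cf_cons_cons, cf_cons_cons]
        rw [show (a:ℚ) + 1 / cf P - (a + 1 / cf Q) = (cf Q - cf P) / (cf P * cf Q) by
          field_simp; ring]
        rw [abs_div, abs_of_pos (mul_pos hPpos hQpos), abs_sub_comm]
      rw [key]
      have hprod : ∏ j ∈ Finset.Icc 1 (k+1), (1 : ℚ) / ((a :: P).getD j 0) ^ 2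
          = (1 / (x:ℚ)^2) * ∏ j ∈ Finset.Icc 1 k, (1 : ℚ) / (P.getD j 0) ^ 2 := by
        rw [← Finset.Ico_add_one_right_eq_Icc, ← Finset.Ico_add_one_right_eq_Icc, Finset.prod_Ico_eq_prod_range,
          Finset.prod_Ico_eq_prod_range]
        simp only [Nat.add_sub_cancel]
        rw [Finset.prod_range_succ']
        simp only [List.getD_cons_succ]
        rw [mul_comm]
        have hx0 : ((P.getD 0 0 : ℕ) : ℚ) = x := by simp [P]
        rw [hx0]
        congr 1
      rw [hprod]
      have hmono : |cf P - cf Q| / (cf P * cf Q) ≤ |cf P - cf Q| / ((x:ℚ)^2) := by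
        apply div_le_div_of_nonneg_left (abs_nonneg _) (by positivity)
        have := hcfP.1
        have := hcfQ.1
        nlinarith [hxy ▸ hcfQ.1]
      calc |cf P - cf Q| / (cf P * cf Q) ≤ |cf P - cf Q| / ((x:ℚ)^2) := hmono
        _ ≤ (∏ j ∈ Finset.Icc 1 k, (1 : ℚ) / (P.getD j 0) ^ 2) / ((x:ℚ)^2) := by
            apply div_le_div_of_nonneg_right ih (by positivity)
        _ = (1 / (x:ℚ)^2) * ∏ j ∈ Finset.Icc 1 k, (1 : ℚ) / (P.getD j 0) ^ 2 := by
            ring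

theorem cf_difference_bound (p q : List ℕ)
    (hp : ∀ i, 1 ≤ i → i < p.length → 0 < p.getD i 0)
    (hq : ∀ i, 1 ≤ i → i < q.length → 0 < q.getD i 0)
    (hne : cf p ≠ cf q)
    (k : ℕ) (hkp : k < p.length) (hkq : k < q.length)
    (hagree : ∀ i, i ≤ k → p.getD i 0 = q.getD i 0) :
    |cf p - cf q| ≤ ∏ j ∈ Finset.Icc 1 k, (1 : ℚ) / (p.getD j 0) ^ 2 := by
  exact cf_aux k p q (tail_ge p hp) (tail_ge q hq) hkp hkq hagree
end
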